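/- Let F be a linear ordered field with an order positive presentation ν : ℕ → F, and let f be a polynomial over F. Then the set {n : ℕ | the polynomial f' − ν(n) (the derivative of f minus the constant ν(n)) is separable} is computably enumerable, i.e., it is the domain of some partial computable function ℕ →. ℕ. -/

import Mathlib

open Polynomial

/-- A set of natural numbers is computably enumerable if it is the domain of some
partial computable function `ℕ →. ℕ`. -/
def CESet (S : Set ℕ) : Prop :=
  ∃ g : ℕ →. ℕ, Partrec g ∧ ∀ n, (g n).Dom ↔ n ∈ S

/-- `ν : ℕ → F` is an order positive presentation of the linear ordered field `F`. -/
structure OrderPosPres (F : Type*) [Field F] [LinearOrder F] [IsStrictOrderedRing F] (ν : ℕ → F) : Prop where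
  surj : Function.Surjective ν
  add : ∃ a : ℕ → ℕ → ℕ, Computable₂ a ∧ ∀ n k, ν (a n k) = ν n + ν k
  mul : ∃ m : ℕ → ℕ → ℕ, Computable₂ m ∧ ∀ n k, ν (m n k) = ν n * ν k
  lt : CESet {p : ℕ | ∃ n k, p = Nat.pair n k ∧ ν n < ν k}
  inv : ∃ g : ℕ →. ℕ, Partrec g ∧ ∀ n, ν n ≠ 0 → ∃ v ∈ g n, ν v = (ν n)⁻¹

/-! ### Auxiliary lemmas on c.e. sets -/

lemma CESet.univ : CESet (Set.univ : Set ℕ) :=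
  ⟨fun _ => Part.some 0, Computable.const 0, fun _ => by simp⟩

lemma CESet.inter {A B : Set ℕ} (hA : CESet A) (hB : CESet B) : CESet (A ∩ B) := by
  obtain ⟨gA, hgA, hdA⟩ := hA
  obtain ⟨gB, hgB, hdB⟩ := hB
  refine ⟨fun n => (gA n).bind fun _ => gB n,
    hgA.bind ((hgB.comp Computable.fst).to₂ : Partrec₂ fun n (_ : ℕ) => gB n), fun n => ?_⟩
  simp only [Part.bind_dom]
  rw [exists_prop]
  exact and_congr (hdA n) (hdB n)

lemma CESet.union {A B : Set ℕ} (hA : CESet A) (hB : CESet B) : CESet (A ∪ B) := by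
  obtain ⟨gA, hgA, hdA⟩ := hA
  obtain ⟨gB, hgB, hdB⟩ := hB
  obtain ⟨k, hk, H⟩ := Partrec.merge' hgA hgB
  refine ⟨k, hk, fun n => ?_⟩
  rw [(H n).2, hdA, hdB]
  rfl

lemma CESet.comp {A : Set ℕ} (hA : CESet A) {h : ℕ → ℕ} (hh : Computable h) :
    CESet (h ⁻¹' A) := by
  obtain ⟨gA, hgA, hdA⟩ := hA
  exact ⟨fun n => gA (h n), hgA.comp hh, fun n => hdA (h n)⟩

lemma ceset_lt {F : Type*} [Field F] [LinearOrder F] [IsStrictOrderedRing F] {ν : ℕ → F} (hν : OrderPosPres F ν)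
    (k : ℕ) : CESet {n : ℕ | ν n < ν k} := by
  have h := (hν.lt).comp
    (h := fun n => Nat.pair n k)
    ((Primrec₂.natPair.comp .id (.const k)).to_comp)
  convert h using 1
  ext n
  simp only [Set.mem_setOf_eq, Set.mem_preimage]
  constructor
  · intro h; exact ⟨n, k, rfl, h⟩
  · rintro ⟨a, b, hab, h⟩
    obtain ⟨rfl, rfl⟩ := Nat.pair_eq_pair.1 hab
    exact h

lemma ceset_gt {F : Type*} [Field F] [LinearOrder F] [IsStrictOrderedRing F] {ν : ℕ → F} (hν : OrderPosPres F ν)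
    (k : ℕ) : CESet {n : ℕ | ν k < ν n} := by
  have h := (hν.lt).comp
    (h := fun n => Nat.pair k n)
    ((Primrec₂.natPair.comp (.const k) .id).to_comp)
  convert h using 1
  ext n
  simp only [Set.mem_setOf_eq, Set.mem_preimage]
  constructor
  · intro h; exact ⟨k, n, rfl, h⟩
  · rintro ⟨a, b, hab, h⟩
    obtain ⟨rfl, rfl⟩ := Nat.pair_eq_pair.1 hab
    exact h

lemma ceset_ne {F : Type*} [Field F] [LinearOrder F] [IsStrictOrderedRing F] {ν : ℕ → F} (hν : OrderPosPres F ν)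
    (s : F) : CESet {n : ℕ | ν n ≠ s} := by
  obtain ⟨k, rfl⟩ := hν.surj s
  have h := (ceset_lt hν k).union (ceset_gt hν k)
  convert h using 1
  ext n
  simp only [Set.mem_setOf_eq, Set.mem_union]
  exact ne_iff_lt_or_gt

lemma ceset_notin {F : Type*} [Field F] [LinearOrder F] [IsStrictOrderedRing F] {ν : ℕ → F} (hν : OrderPosPres F ν)
    (S : Finset F) : CESet {n : ℕ | ν n ∉ S} := by
  classical
  induction S using Finset.induction_on with
  | empty => simpa using CESet.univ
  | @insert a S ha ih =>
    have h := (ceset_ne hν a).inter ih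
    convert h using 1
    ext n
    simp only [Set.mem_setOf_eq, Finset.mem_insert, Set.mem_inter_iff]
    tauto

/-! ### The set of non-admissible values is finite -/

lemma bad_finite {F : Type*} [Field F] [CharZero F] (g : F[X]) :
    {c : F | ¬ (g - C c).Separable}.Finite := by
  classical
  by_cases hg' : derivative g = 0
  · -- `g` is a constant
    have hdeg : g.natDegree = 0 := natDegree_eq_zero_of_derivative_eq_zero hg'
    obtain ⟨a, rfl⟩ := natDegree_eq_zero.mp hdeg
    apply Set.Finite.subset (Set.finite_singleton a)
    intro c hc
    simp only [Set.mem_setOf_eq] at hc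
    simp only [Set.mem_singleton_iff]
    by_contra hca
    apply hc
    rw [← C_sub]
    exact (separable_C (a - c)).2 (isUnit_iff_ne_zero.2 (sub_ne_zero.2 fun h => hca h.symm))
  · -- `g` has nonzero derivative
    set K := AlgebraicClosure F
    set φ := algebraMap F K
    set T : Finset K :=
      (((derivative g).map φ).roots.toFinset.image fun r => (g.map φ).eval r) with hT
    apply Set.Finite.subset ((T.finite_toSet).preimage (φ.injective.injOn))
    intro c hc
    simp only [Set.mem_setOf_eq] at hc
    simp only [Set.mem_preimage]
    rw [Finset.mem_coe, hT]
    simp only [Finset.mem_image, Multiset.mem_toFinset]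
    -- not separable means not coprime with the derivative, which is `derivative g`
    rw [Polynomial.Separable, derivative_sub, derivative_C, sub_zero] at hc
    rw [← Polynomial.isCoprime_map φ] at hc
    set P := (g - C c).map φ
    set Q := (derivative g).map φ
    have hQ : Q ≠ 0 := (Polynomial.map_ne_zero_iff φ.injective).2 hg'
    set d := EuclideanDomain.gcd P Q with hd
    have hdu : ¬ IsUnit d := fun h => hc (EuclideanDomain.gcd_isUnit_iff.1 h)
    have hd0 : d ≠ 0 := fun h => hQ ((EuclideanDomain.gcd_eq_zero_iff.1 (hd ▸ h)).2)
    have hddeg : d.degree ≠ 0 := fun h => hdu (isUnit_iff_degree_eq_zero.2 h)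
    obtain ⟨r, hr⟩ := IsAlgClosed.exists_root d hddeg
    have hrP : P.eval r = 0 :=
      eval_eq_zero_of_dvd_of_eval_eq_zero (EuclideanDomain.gcd_dvd_left P Q) hr
    have hrQ : Q.eval r = 0 :=
      eval_eq_zero_of_dvd_of_eval_eq_zero (EuclideanDomain.gcd_dvd_right P Q) hr
    refine ⟨r, (mem_roots hQ).2 hrQ, ?_⟩
    have h0 : (g.map φ).eval r - φ c = 0 := by
      simpa [P, Polynomial.map_sub, eval_sub] using hrP
    exact sub_eq_zero.1 h0

/-- For an order positive field `(F, ν)` and a polynomial `f` over `F`, the set of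
indices `n` such that `ν n` is admissible for `f` (i.e. `f' - ν n` is separable) is
computably enumerable. -/
theorem ce_admissible_indices
    {F : Type*} [Field F] [LinearOrder F] [IsStrictOrderedRing F] (ν : ℕ → F) (hν : OrderPosPres F ν)
    (f : Polynomial F) :
    CESet {n : ℕ | (derivative f - C (ν n)).Separable} := by
  classical
  obtain hfin := bad_finite (derivative f)
  have h := ceset_notin hν hfin.toFinset
  convert h using 1
  ext n
  simp only [Set.mem_setOf_eq, Set.Finite.mem_toFinset, Set.mem_setOf_eq, not_not]
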